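/- If s is a nonnegative differentiable function satisfying s'(t) ≤ c + r·s(t) − ξ₃·s(t)² for all t ≥ 0, where c, r, ξ₃ > 0, then limsup_{t→∞} s(t) ≤ (r + √(r² + 4ξ₃c))/(2ξ₃). -/

import Mathlib

theorem nonsterile_limsup_bound (s : ℝ → ℝ) (c r ξ₃ : ℝ) (hc : 0 < c) (hr : 0 < r)
    (hξ : 0 < ξ₃) (hdiff : Differentiable ℝ s) (hnn : ∀ t ≥ (0:ℝ), 0 ≤ s t)
    (hineq : ∀ t ≥ (0:ℝ), deriv s t ≤ c + r * s t - ξ₃ * (s t) ^ 2) :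
    Filter.limsup s Filter.atTop ≤ (r + Real.sqrt (r ^ 2 + 4 * ξ₃ * c)) / (2 * ξ₃) := by
  have hDpos : (0:ℝ) < r ^ 2 + 4 * ξ₃ * c := by positivity
  have hsq : Real.sqrt (r ^ 2 + 4 * ξ₃ * c) ^ 2 = r ^ 2 + 4 * ξ₃ * c :=
    Real.sq_sqrt hDpos.le
  obtain ⟨M, hMdef⟩ : ∃ x : ℝ, x = (r + Real.sqrt (r ^ 2 + 4 * ξ₃ * c)) / (2 * ξ₃) := ⟨_, rfl⟩
  rw [← hMdef]
  have hrltsqrt : r < Real.sqrt (r ^ 2 + 4 * ξ₃ * c) :=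
    (Real.lt_sqrt hr.le).mpr (by nlinarith)
  have hMgt : r / ξ₃ < M := by
    rw [hMdef, div_lt_div_iff₀ hξ (by positivity)]
    nlinarith
  have hMpos : 0 < M := lt_trans (by positivity) hMgt
  have hroot : ξ₃ * M ^ 2 - r * M - c = 0 := by
    rw [hMdef]
    field_simp
    rw [show r ^ 2 + ξ₃ * 4 * c = r ^ 2 + 4 * ξ₃ * c by ring]
    nlinarith [hsq]
  -- key: for every ε > 0, eventually s t ≤ M + ε
  have key : ∀ ε > (0:ℝ), ∀ᶠ t in Filter.atTop, s t ≤ M + ε := by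
    intro ε hε
    obtain ⟨K, hK⟩ : ∃ x : ℝ, x = M + ε := ⟨_, rfl⟩
    have hKM : M < K := by rw [hK]; linarith
    have hKr : r < ξ₃ * K := by
      have := lt_trans hMgt hKM
      rw [div_lt_iff₀ hξ] at this
      linarith [this]
    have hδ : 0 < ξ₃ * K ^ 2 - r * K - c := by
      nlinarith [mul_pos (sub_pos.mpr hKM) (sub_pos.mpr hKr),
        mul_pos (mul_pos hξ hMpos) (sub_pos.mpr hKM), hroot]
    obtain ⟨δ, hδdef⟩ : ∃ x : ℝ, x = ξ₃ * K ^ 2 - r * K - c := ⟨_, rfl⟩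
    rw [← hδdef] at hδ
    have hKpos : 0 < K := lt_trans hMpos hKM
    -- derivative bound above level K
    have hddec : ∀ t, 0 ≤ t → K ≤ s t → deriv s t ≤ -δ := by
      intro t ht hst
      have h1 := hineq t ht
      have h3 : 0 ≤ (s t - K) * (ξ₃ * (s t + K) - r) := by
        have := mul_le_mul_of_nonneg_left hst hξ.le
        apply mul_nonneg <;> nlinarith
      nlinarith [h3, hδ]
    -- step 1: some t₀ ≥ 0 with s t₀ ≤ K
    have step1 : ∃ t₀, 0 ≤ t₀ ∧ s t₀ ≤ K := by
      by_contra h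
      push_neg at h
      have hs00 : 0 ≤ s 0 := hnn 0 le_rfl
      obtain ⟨T, hT⟩ : ∃ x : ℝ, x = s 0 / δ + 1 := ⟨_, rfl⟩
      have hTpos : 0 < T := by
        have := div_nonneg hs00 hδ.le
        rw [hT]; linarith
      obtain ⟨x, hxmem, hxeq⟩ := exists_deriv_eq_slope s hTpos
        hdiff.continuous.continuousOn (fun y _ => (hdiff y).differentiableWithinAt)
      have hx0 : 0 ≤ x := hxmem.1.le
      have hder : deriv s x ≤ -δ := hddec x hx0 (h x hx0).le
      have hcancel : δ * (s 0 / δ) = s 0 := mul_div_cancel₀ _ hδ.ne'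
      have hTne : (T : ℝ) - 0 = T := by ring
      rw [hTne, eq_div_iff hTpos.ne'] at hxeq
      have h4 : deriv s x * T ≤ -δ * T := mul_le_mul_of_nonneg_right hder hTpos.le
      have h5 : δ * T = s 0 + δ := by rw [hT, mul_add, hcancel, mul_one]
      have hbadder : deriv s x ≤ -δ := hder
      have hbad : s T < 0 := by nlinarith
      exact absurd (hnn T hTpos.le) (not_le.mpr hbad)
    obtain ⟨t₀, ht₀0, hs₀⟩ := step1
    -- step 2: invariance
    have step2 : ∀ t ≥ t₀, s t ≤ K := by
      intro t₁ ht₁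
      by_contra hgt
      push_neg at hgt
      have ht₀t₁ : t₀ < t₁ := by
        rcases lt_or_eq_of_le ht₁ with h | h
        · exact h
        · exact absurd (h ▸ hs₀) (not_le.mpr (h ▸ hgt))
      obtain ⟨A, hA⟩ : ∃ x : Set ℝ, x = Set.Icc t₀ t₁ ∩ s ⁻¹' Set.Iic K := ⟨_, rfl⟩
      have hAclosed : IsClosed A := by
        rw [hA]; exact isClosed_Icc.inter (isClosed_Iic.preimage hdiff.continuous)
      have hAne : A.Nonempty := ⟨t₀, by rw [hA]; exact ⟨⟨le_rfl, ht₀t₁.le⟩, hs₀⟩⟩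
      have hAbdd : BddAbove A := ⟨t₁, fun u hu => by rw [hA] at hu; exact hu.1.2⟩
      obtain ⟨τ, hτ⟩ : ∃ x : ℝ, x = sSup A := ⟨_, rfl⟩
      have hτA : τ ∈ Set.Icc t₀ t₁ ∩ s ⁻¹' Set.Iic K := by
        rw [← hA, hτ]; exact hAclosed.csSup_mem hAne hAbdd
      have hτlt : τ < t₁ := by
        rcases lt_or_eq_of_le hτA.1.2 with h | h
        · exact h
        · exact absurd (h ▸ hτA.2) (not_le.mpr hgt)
      have hgtτ : ∀ u, τ < u → u ≤ t₁ → K < s u := by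
        intro u hu hu'
        by_contra hle
        push_neg at hle
        have hmem : u ∈ A := by rw [hA]; exact ⟨⟨le_trans hτA.1.1 hu.le, hu'⟩, hle⟩
        exact absurd (hτ ▸ le_csSup hAbdd hmem) (not_le.mpr hu)
      obtain ⟨x, hxmem, hxeq⟩ := exists_deriv_eq_slope s hτlt
        hdiff.continuous.continuousOn (fun y _ => (hdiff y).differentiableWithinAt)
      have hx0 : 0 ≤ x := le_trans (le_trans ht₀0 hτA.1.1) hxmem.1.le
      have hder : deriv s x ≤ -δ := hddec x hx0 (hgtτ x hxmem.1 hxmem.2.le).le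
      have hsτ : s τ ≤ K := hτA.2
      have hpos : 0 < (s t₁ - s τ) / (t₁ - τ) :=
        div_pos (by linarith) (by linarith)
      rw [hxeq] at hder
      linarith
    filter_upwards [Filter.eventually_ge_atTop t₀] with t ht using hK ▸ step2 t ht
  -- conclude
  have hcobdd : Filter.IsCoboundedUnder (· ≤ ·) Filter.atTop s :=
    Filter.isCoboundedUnder_le_of_eventually_le Filter.atTop
      (x := 0) ((Filter.eventually_ge_atTop 0).mono fun t ht => hnn t ht)
  refine le_of_forall_pos_le_add fun ε hε => ?_
  exact Filter.limsup_le_of_le hcobdd (key ε hε)
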